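/- Let a_{ij} ∈ ℝ and signs h_{ij} ∈ {−1, +1} be given for every edge (i,j) ∈ E, and let Δ be the n×n real matrix with Δ_{ij} = −h_{ij} a_{ij} for i ≠ j and Δ_{ii} = Σ_{j≠i} a_{ij}. Then det Δ_[m] = Σ_F 2^{|𝒞(F)|} a_F, where the sum runs over all cycle-and-well-rooted spanning forests F ∈ ℱ→_m all of whose cycles c are negative, i.e., satisfy h_c = −1 (forests having a positive cycle contribute 0). -/

import Mathlib

/-!
Zaslavsky's matrix-tree theorem for signed graphs:
`det Δ_[m] = Σ_F 2^{|𝒞(F)|} a_F`, the sum running over the cycle-and-well-rooted spanning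
forests all of whose cycles are negative.
-/

open Finset Function

/-- Ordered product of the edge values along the path `x, g x, g^[2] x, …, g^[r] x`. -/
def pathProd {V H : Type*} [Ring H] (h : V → V → H) (g : V → V) (x : V) (r : ℕ) : H :=
  ((List.range r).map fun t => h (g^[t] x) (g^[t + 1] x)).prod

/-- `x` is the canonical (`enc`-minimal) point on a nontrivial cycle of `g`. -/
def IsCycleRep {V : Type*} (enc : V → ℕ) (g : V → V) (x : V) : Prop :=
  2 ≤ minimalPeriod g x ∧ ∀ t : ℕ, enc x ≤ enc (g^[t] x)

/-- The canonical representatives of the (nontrivial) cycles of `g`. -/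
noncomputable def cycleReps {V : Type*} [Fintype V] (enc : V → ℕ) (g : V → V) : Finset V :=
  @Finset.filter V (IsCycleRep enc g) (Classical.decPred _) Finset.univ

/-- Extension of `f : U → V` to all of `V = {1,…,n}`, fixing the well pointwise. -/
def extFun {n m : ℕ} (hmn : m ≤ n) (f : Fin m → Fin n) : Fin n → Fin n :=
  fun j => if h : (j : ℕ) < m then f ⟨(j : ℕ), h⟩ else j

open Matrix


/-- The equivalence `↥(s.erase x) ⊕ Unit ≃ ↥s`. -/
def eraseEquiv {V : Type*} [DecidableEq V] {s : Finset V} {x : V} (hx : x ∈ s) :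
    (↥(s.erase x) ⊕ Unit) ≃ ↥s where
  toFun := Sum.elim (fun i => ⟨i, Finset.mem_of_mem_erase i.2⟩) (fun _ => ⟨x, hx⟩)
  invFun i := if h : (i : V) = x then Sum.inr () else Sum.inl ⟨i, Finset.mem_erase.2 ⟨h, i.2⟩⟩
  left_inv i := by
    rcases i with i | u
    · simp only [Sum.elim_inl]
      exact dif_neg (Finset.ne_of_mem_erase i.2)
    · simp
  right_inv i := by
    by_cases h : (i : V) = x
    · simp only [dif_pos h, Sum.elim_inr]; exact Subtype.ext h.symm
    · simp only [dif_neg h, Sum.elim_inl]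

lemma det_erase_col {R : Type*} [CommRing R] {V : Type*} [DecidableEq V]
    {s : Finset V} {x : V} (hx : x ∈ s) (M : Matrix s s R)
    (hcol : ∀ i : s, M i ⟨x, hx⟩ = if (i : V) = x then 1 else 0) :
    M.det = Matrix.det (Matrix.of fun i j : ↥(s.erase x) =>
      M ⟨i, Finset.mem_of_mem_erase i.2⟩ ⟨j, Finset.mem_of_mem_erase j.2⟩) := by
  rw [← Matrix.det_submatrix_equiv_self (eraseEquiv hx) M]
  have : M.submatrix (eraseEquiv hx) (eraseEquiv hx) =
      Matrix.fromBlocks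
        (Matrix.of fun i j : ↥(s.erase x) =>
          M ⟨i, Finset.mem_of_mem_erase i.2⟩ ⟨j, Finset.mem_of_mem_erase j.2⟩)
        0
        (Matrix.of fun (_ : Unit) (j : ↥(s.erase x)) =>
          M ⟨x, hx⟩ ⟨j, Finset.mem_of_mem_erase j.2⟩)
        1 := by
    ext i j
    rcases i with i | u <;> rcases j with j | v
    · rfl
    · simp only [Matrix.submatrix_apply, Matrix.fromBlocks_apply₁₂, Matrix.zero_apply,
        eraseEquiv, Equiv.coe_fn_mk, Sum.elim_inl, Sum.elim_inr]
      rw [hcol]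
      exact if_neg (Finset.ne_of_mem_erase i.2)
    · rfl
    · simp only [Matrix.submatrix_apply, Matrix.fromBlocks_apply₂₂,
        eraseEquiv, Equiv.coe_fn_mk, Sum.elim_inr]
      rw [hcol, if_pos rfl]
      simp [Matrix.one_apply]
  rw [this, Matrix.det_fromBlocks_zero₁₂]
  simp [Matrix.det_unique]

variable {V : Type*}

lemma iterate_mem_periodicPts' (g : V → V) {x : V} (hx : x ∈ periodicPts g) (t : ℕ) :
    g^[t] x ∈ periodicPts g :=
  mk_mem_periodicPts (minimalPeriod_pos_of_mem_periodicPts hx)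
    ((isPeriodicPt_minimalPeriod g x).apply_iterate t)

lemma exists_iterate_back (g : V → V) {z : V} (hz : z ∈ periodicPts g) (t : ℕ) :
    ∃ t', g^[t'] (g^[t] z) = z := by
  obtain ⟨q, hq, hqz⟩ := hz
  refine ⟨q * t - t, ?_⟩
  rw [← Function.iterate_add_apply]
  have h1 : t ≤ q * t := Nat.le_mul_of_pos_left t hq
  have : q * t - t + t = q * t := Nat.sub_add_cancel h1
  rw [this]
  exact hqz.mul_const t

lemma exists_periodic_of_finite {α : Type*} [Finite α] (f : α → α) (x : α) :
    ∃ (y : α) (k : ℕ), 0 < k ∧ f^[k] y = y ∧ ∃ a, y = f^[a] x := by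
  obtain ⟨a, b, hab, hfab⟩ := Finite.exists_ne_map_eq_of_infinite (fun n : ℕ => f^[n] x)
  rcases hab.lt_or_gt with hlt | hlt
  · refine ⟨f^[a] x, b - a, by omega, ?_, ⟨a, rfl⟩⟩
    rw [← Function.iterate_add_apply, Nat.sub_add_cancel hlt.le]
    exact hfab.symm
  · refine ⟨f^[b] x, a - b, by omega, ?_, ⟨b, rfl⟩⟩
    rw [← Function.iterate_add_apply, Nat.sub_add_cancel hlt.le]
    exact hfab

lemma updateRow_updateRow' {R : Type*} {m l : Type*} [DecidableEq m] (M : Matrix m l R)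
    (i : m) (u v : l → R) : (M.updateRow i u).updateRow i v = M.updateRow i v := by
  ext a b
  by_cases h : a = i
  · subst h; rw [Matrix.updateRow_self, Matrix.updateRow_self]
  · rw [Matrix.updateRow_ne h, Matrix.updateRow_ne h, Matrix.updateRow_ne h]

open scoped Classical in
/-- Key determinant computation. -/
theorem det_one_sub_funct {R : Type*} [CommRing R] {W : Type*} [Fintype W] [DecidableEq W]
    [LinearOrder W]
    (g : W → W) (w : W → R) (s : Finset W) :
    (Matrix.of fun i j : s =>
        (if (i : W) = j then (1 : R) else 0) - (if g i = j then w i else 0)).det =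
      ∏ x ∈ Finset.univ.filter
          (fun x => x ∈ periodicPts g ∧ (∀ t, g^[t] x ∈ s) ∧ ∀ t, x ≤ g^[t] x),
        (1 - ∏ t ∈ Finset.range (minimalPeriod g x), w (g^[t] x)) := by
  induction s using Finset.strongInduction with
  | _ s IH =>
  set M : Matrix s s R := Matrix.of fun i j : s =>
      (if (i : W) = j then (1 : R) else 0) - (if g i = j then w i else 0) with hM
  by_cases hfl : ∃ x ∈ s, ¬ (x ∈ periodicPts g ∧ ∀ t, g^[t] x ∈ s)
  · -- Case A: there is a "floating" vertex; find one with no preimage in `s`.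
    have hex : ∃ x ∈ s, (¬ (x ∈ periodicPts g ∧ ∀ t, g^[t] x ∈ s)) ∧ ∀ j ∈ s, g j ≠ x := by
      by_contra hcon
      push_neg at hcon
      set FL := s.filter (fun x => ¬ (x ∈ periodicPts g ∧ ∀ t, g^[t] x ∈ s)) with hFL
      have hFLne : FL.Nonempty := by
        obtain ⟨x, hxs, hx⟩ := hfl
        exact ⟨x, Finset.mem_filter.2 ⟨hxs, hx⟩⟩
      have hprev : ∀ y : FL, ∃ z : FL, g z = y := by
        rintro ⟨y, hy⟩
        rw [hFL, Finset.mem_filter] at hy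
        obtain ⟨j, hjs, hj⟩ := hcon y hy.1 (fun hA => not_forall.mp (not_and.mp hy.2 hA))
        refine ⟨⟨j, Finset.mem_filter.2 ⟨hjs, ?_⟩⟩, by simpa using hj⟩
        rintro ⟨hper, horb⟩
        apply hy.2
        constructor
        · rw [← hj]; exact iterate_mem_periodicPts' g hper 1
        · intro t
          have : g^[t] y = g^[t + 1] j := by
            rw [Function.iterate_add_apply, Function.iterate_one, hj]
          rw [this]; exact horb (t + 1)
      choose prev hprevg using hprev
      have hy0 : FL.Nonempty := hFLne
      obtain ⟨y, k, hk, hky, -⟩ :=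
        exists_periodic_of_finite prev ⟨hy0.choose, hy0.choose_spec⟩
      -- g^[m] (prev^[m] z) = z
      have hgp : ∀ (m : ℕ) (z : FL), g^[m] ((prev^[m] z : FL) : W) = z := by
        intro m
        induction m with
        | zero => intro z; rfl
        | succ m IHm =>
          intro z
          rw [Function.iterate_succ_apply' prev, Function.iterate_succ_apply g,
            hprevg, IHm]
      have hyper : (y : W) ∈ periodicPts g := by
        refine mk_mem_periodicPts hk ?_
        show g^[k] (y : W) = y
        conv_lhs => rw [← hky]
        exact hgp k y
      have horb : ∀ t, g^[t] (y : W) ∈ s := by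
        intro t
        have h1 : g^[t % k] (y : W) = g^[t] (y : W) := by
          refine Function.IsPeriodicPt.iterate_mod_apply ?_ t
          show g^[k] (y : W) = y
          conv_lhs => rw [← hky]
          exact hgp k y
        have hlt : t % k < k := Nat.mod_lt _ hk
        set m := t % k
        have hsplit : y = prev^[m] (prev^[k - m] y) := by
          conv_lhs => rw [← hky]
          rw [← Function.iterate_add_apply, Nat.add_sub_cancel' hlt.le]
        have h2 : g^[m] ((y : W)) = ((prev^[k - m] y : { x // x ∈ FL }) : W) := by
          conv_lhs => rw [hsplit]
          exact hgp m _
        rw [← h1, h2]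
        exact Finset.mem_of_mem_filter _ (prev^[k - m] y).2
      have : (y : W) ∈ FL := y.2
      exact (Finset.mem_filter.1 this).2 ⟨hyper, horb⟩
    obtain ⟨x0, hx0s, hx0fl, hx0pre⟩ := hex
    have hcol : ∀ i : s, M i ⟨x0, hx0s⟩ = if (i : W) = x0 then 1 else 0 := by
      intro i
      have hne : g (i : W) ≠ x0 := hx0pre i i.2
      simp [hM, hne]
      exact if_congr Subtype.ext_iff rfl rfl
    rw [det_erase_col hx0s M hcol]
    have hMe : (Matrix.of fun i j : ↥(s.erase x0) =>
        M ⟨i, Finset.mem_of_mem_erase i.2⟩ ⟨j, Finset.mem_of_mem_erase j.2⟩) =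
        (Matrix.of fun i j : ↥(s.erase x0) =>
          (if (i : W) = j then (1 : R) else 0) - (if g i = j then w i else 0)) := rfl
    rw [hMe, IH _ (Finset.erase_ssubset hx0s)]
    congr 1
    ext z
    simp only [Finset.mem_filter, Finset.mem_univ, true_and]
    constructor
    · rintro ⟨hper, horbz, hminz⟩
      exact ⟨hper, fun t => Finset.mem_of_mem_erase (horbz t), hminz⟩
    · rintro ⟨hper, horbz, hminz⟩
      refine ⟨hper, fun t => Finset.mem_erase.2 ⟨?_, horbz t⟩, hminz⟩
      intro hgt
      apply hx0fl
      constructor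
      · rw [← hgt]; exact iterate_mem_periodicPts' g hper t
      · intro t'
        have : g^[t'] x0 = g^[t' + t] z := by
          rw [Function.iterate_add_apply, hgt]
        rw [this]; exact horbz (t' + t)
  · -- Case B : no floating vertex.
    push_neg at hfl
    rcases Finset.eq_empty_or_nonempty s with rfl | ⟨y0, hy0⟩
    · haveI : IsEmpty (↥(∅ : Finset W)) := by
        simp only [Finset.isEmpty_coe_sort]
      rw [Matrix.det_isEmpty]
      have hemp : (Finset.univ.filter
          (fun x => x ∈ periodicPts g ∧ (∀ t, g^[t] x ∈ (∅ : Finset W)) ∧ ∀ t, x ≤ g^[t] x))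
          = (∅ : Finset W) := by
        refine Finset.filter_eq_empty_iff.2 ?_
        rintro z -
        rintro ⟨-, horbz, -⟩
        simpa using horbz 0
      rw [hemp, Finset.prod_empty]
    · have hq : 0 < minimalPeriod g y0 :=
        minimalPeriod_pos_of_mem_periodicPts (hfl y0 hy0).1
      set q := minimalPeriod g y0 with hqdef
      set O : Finset W := (Finset.range q).image (fun t => g^[t] y0) with hO
      have hOne : O.Nonempty := by
        refine ⟨y0, ?_⟩
        rw [hO, Finset.mem_image]
        exact ⟨0, Finset.mem_range.2 hq, rfl⟩
      set x := O.min' hOne with hxdef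
      obtain ⟨t0, -, hxt0⟩ := Finset.mem_image.1 (O.min'_mem hOne)
      rw [← hxdef] at hxt0
      have hxper : x ∈ periodicPts g := by
        rw [← hxt0]; exact iterate_mem_periodicPts' g (hfl y0 hy0).1 t0
      have horb : ∀ t, g^[t] x ∈ s := by
        intro t
        rw [← hxt0, ← Function.iterate_add_apply]
        exact (hfl y0 hy0).2 (t + t0)
      have hmin : ∀ t, x ≤ g^[t] x := by
        intro t
        refine Finset.min'_le O _ ?_
        rw [hO, Finset.mem_image]
        refine ⟨(t + t0) % q, Finset.mem_range.2 (Nat.mod_lt _ hq), ?_⟩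
        rw [(isPeriodicPt_minimalPeriod g y0).iterate_mod_apply]
        rw [← hxt0, ← Function.iterate_add_apply]
      have hxs : x ∈ s := horb 0
      set xs : s := ⟨x, hxs⟩ with hxsdef
      set r := minimalPeriod g x with hrdef
      have hr1 : 1 ≤ r := minimalPeriod_pos_of_mem_periodicPts hxper
      -- the row-operation induction
      have key : ∀ k, 1 ≤ k → k ≤ r →
          M.det = (M.updateRow xs (fun j => (if x = (j : W) then (1 : R) else 0)
            - (∏ t ∈ Finset.range k, w (g^[t] x)) *
              (if g^[k] x = (j : W) then 1 else 0))).det := by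
        intro k hk1 hkr
        induction k with
        | zero => omega
        | succ k IHk =>
          rcases Nat.eq_zero_or_pos k with rfl | hkpos
          · have hrow : (fun j : s => (if x = (j : W) then (1 : R) else 0)
                - (∏ t ∈ Finset.range 1, w (g^[t] x)) *
                  (if g^[1] x = (j : W) then 1 else 0)) = M xs := by
              funext j
              simp only [hM, Matrix.of_apply, Finset.prod_range_one,
                Function.iterate_zero_apply, Function.iterate_one]
              show _ = (if x = (j : W) then (1 : R) else 0) - (if g x = (j : W) then w x else 0)
              split_ifs <;> ring
            rw [hrow, Matrix.updateRow_eq_self]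
          · have hkr' : k ≤ r := by omega
            have hkltr : k < r := by omega
            have hyx : g^[k] x ≠ x := by
              intro hfix
              have : r ≤ k := Function.IsPeriodicPt.minimalPeriod_le hkpos hfix
              omega
            have hys : g^[k] x ∈ s := horb k
            set ys : s := ⟨g^[k] x, hys⟩ with hysdef
            have hysxs : xs ≠ ys := by
              intro hh
              exact hyx (congrArg Subtype.val hh).symm
            set P := ∏ t ∈ Finset.range k, w (g^[t] x) with hP
            set A := M.updateRow xs (fun j => (if x = (j : W) then (1 : R) else 0)
              - P * (if g^[k] x = (j : W) then 1 else 0)) with hA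
            have hnew : (fun j : s => (if x = (j : W) then (1 : R) else 0)
                - (∏ t ∈ Finset.range (k + 1), w (g^[t] x)) *
                  (if g^[k + 1] x = (j : W) then 1 else 0)) = A xs + P • A ys := by
              funext j
              have hAys : A ys = M ys := Matrix.updateRow_ne (Ne.symm hysxs)
              rw [Pi.add_apply, Pi.smul_apply, hAys, hA, Matrix.updateRow_self]
              have hMys : M ys j = (if g^[k] x = (j : W) then (1 : R) else 0)
                  - (if g^[k + 1] x = (j : W) then w (g^[k] x) else 0) := by
                show ((if ((ys : W)) = (j : W) then (1 : R) else 0)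
                  - (if g ((ys : W)) = (j : W) then w ((ys : W)) else 0)) = _
                rw [show ((ys : W)) = g^[k] x from rfl,
                  Function.iterate_succ_apply' g k x]
              rw [hMys, Finset.prod_range_succ, smul_eq_mul]
              split_ifs <;> ring
            rw [IHk (by omega) hkr', hnew,
              show M.updateRow xs (A xs + P • A ys) = A.updateRow xs (A xs + P • A ys) from
                (updateRow_updateRow' M xs _ _).symm,
              Matrix.det_updateRow_add_smul_self A hysxs P]
      have hvr : (fun j : s => (if x = (j : W) then (1 : R) else 0)
          - (∏ t ∈ Finset.range r, w (g^[t] x)) * (if g^[r] x = (j : W) then 1 else 0))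
          = (1 - ∏ t ∈ Finset.range r, w (g^[t] x)) •
            (fun j : s => if x = (j : W) then (1 : R) else 0) := by
        funext j
        rw [hrdef, Function.iterate_minimalPeriod]
        simp only [Pi.smul_apply, smul_eq_mul]
        split_ifs <;> ring
      rw [key r hr1 le_rfl, hvr, Matrix.det_updateRow_smul]
      set N := M.updateRow xs (fun j : s => if x = (j : W) then (1 : R) else 0) with hN
      have hcolT : ∀ i : s, Nᵀ i ⟨x, hxs⟩ = if (i : W) = x then 1 else 0 := by
        intro i
        rw [Matrix.transpose_apply, hN,
          show (⟨x, hxs⟩ : s) = xs from rfl, Matrix.updateRow_self]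
        by_cases hix : (i : W) = x
        · rw [if_pos hix.symm, if_pos hix]
        · rw [if_neg (Ne.symm hix), if_neg hix]
      rw [← Matrix.det_transpose N, det_erase_col hxs Nᵀ hcolT]
      have hrest : (Matrix.of fun i j : ↥(s.erase x) =>
          Nᵀ ⟨i, Finset.mem_of_mem_erase i.2⟩ ⟨j, Finset.mem_of_mem_erase j.2⟩) =
          (Matrix.of fun i j : ↥(s.erase x) =>
            (if (i : W) = j then (1 : R) else 0) - (if g i = j then w i else 0))ᵀ := by
        ext i j
        have hjx : (⟨(j : W), Finset.mem_of_mem_erase j.2⟩ : s) ≠ xs := by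
          intro hh
          exact (Finset.mem_erase.1 j.2).1 (congrArg Subtype.val hh)
        show N ⟨(j : W), Finset.mem_of_mem_erase j.2⟩ ⟨(i : W), Finset.mem_of_mem_erase i.2⟩ = _
        rw [hN, Matrix.updateRow_ne hjx]
        rfl
      rw [hrest, Matrix.det_transpose, IH _ (Finset.erase_ssubset hxs)]
      -- now the product bookkeeping
      have hfil : (Finset.univ.filter
          (fun z => z ∈ periodicPts g ∧ (∀ t, g^[t] z ∈ s) ∧ ∀ t, z ≤ g^[t] z))
          = insert x (Finset.univ.filter
          (fun z => z ∈ periodicPts g ∧ (∀ t, g^[t] z ∈ s.erase x) ∧ ∀ t, z ≤ g^[t] z)) := by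
        ext z
        simp only [Finset.mem_filter, Finset.mem_univ, true_and, Finset.mem_insert]
        constructor
        · rintro ⟨hper, horbz, hminz⟩
          by_cases hzx : z = x
          · exact Or.inl hzx
          · refine Or.inr ⟨hper, fun t => Finset.mem_erase.2 ⟨?_, horbz t⟩, hminz⟩
            intro hgt
            obtain ⟨t', ht'⟩ := exists_iterate_back g hper t
            rw [hgt] at ht'
            have h1 : z ≤ x := hgt ▸ hminz t
            have h2 : x ≤ z := ht' ▸ hmin t'
            exact hzx (le_antisymm h1 h2)
        · rintro (rfl | ⟨hper, horbz, hminz⟩)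
          · exact ⟨hxper, horb, hmin⟩
          · exact ⟨hper, fun t => Finset.mem_of_mem_erase (horbz t), hminz⟩
      have hxnot : x ∉ Finset.univ.filter
          (fun z => z ∈ periodicPts g ∧ (∀ t, g^[t] z ∈ s.erase x) ∧ ∀ t, z ≤ g^[t] z) := by
        simp only [Finset.mem_filter, Finset.mem_univ, true_and]
        rintro ⟨-, horbz, -⟩
        exact (Finset.mem_erase.1 (horbz 0)).1 rfl
      rw [hfil, Finset.prod_insert hxnot]

lemma pathProd_eq_prod {V H : Type*} [CommRing H] (h : V → V → H) (g : V → V) (x : V) (r : ℕ) :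
    pathProd h g x r = ∏ t ∈ Finset.range r, h (g^[t] x) (g^[t + 1] x) := by
  induction r with
  | zero => rfl
  | succ r IH =>
    rw [pathProd, List.range_succ, List.map_append, List.prod_append, Finset.prod_range_succ,
      ← pathProd, IH]
    simp

lemma extFun_lt {n m : ℕ} (hmn : m ≤ n) (f : Fin m → Fin n) {v : Fin n} (hv : (v : ℕ) < m) :
    extFun hmn f v = f ⟨(v : ℕ), hv⟩ := dif_pos hv

lemma extFun_ge {n m : ℕ} (hmn : m ≤ n) (f : Fin m → Fin n) {v : Fin n} (hv : ¬ (v : ℕ) < m) :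
    extFun hmn f v = v := dif_neg hv

lemma extFun_ne {n m : ℕ} (hmn : m ≤ n) (f : Fin m → Fin n)
    (hf : ∀ i, f i ≠ Fin.castLE hmn i) {v : Fin n} (hv : (v : ℕ) < m) :
    extFun hmn f v ≠ v := by
  rw [extFun_lt hmn f hv]
  intro hh
  apply hf ⟨(v : ℕ), hv⟩
  rw [hh]
  exact Fin.ext rfl

lemma orbit_lt_of_two_le {n m : ℕ} (hmn : m ≤ n) (f : Fin m → Fin n) {x : Fin n}
    (hx : 2 ≤ minimalPeriod (extFun hmn f) x) (t : ℕ) :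
    (((extFun hmn f)^[t] x : Fin n) : ℕ) < m := by
  set g := extFun hmn f with hg
  by_contra hge
  push_neg at hge
  have hfix : g (g^[t] x) = g^[t] x := extFun_ge hmn f (by omega)
  set p := minimalPeriod g x with hp
  have hN : g^[(t + 1) * p] x = x := (isPeriodicPt_minimalPeriod g x).const_mul (t + 1)
  have htle : t ≤ (t + 1) * p := by nlinarith
  have hxt : x = g^[t] x := by
    have h1 : g^[(t + 1) * p - t] (g^[t] x) = x := by
      rw [← Function.iterate_add_apply, Nat.sub_add_cancel htle]
      exact hN
    have h2 : g^[(t + 1) * p - t] (g^[t] x) = g^[t] x := Function.iterate_fixed hfix _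
    exact h1.symm.trans h2
  have hfx : g x = x := by
    conv_lhs => rw [hxt]
    rw [hfix, ← hxt]
  have : p = 1 := minimalPeriod_eq_one_iff_isFixedPt.2 hfx
  omega

lemma prod_pm (r : ℕ) (F : ℕ → ℝ) (hF : ∀ t < r, F t = 1 ∨ F t = -1) :
    (∏ t ∈ Finset.range r, F t) = 1 ∨ (∏ t ∈ Finset.range r, F t) = -1 := by
  induction r with
  | zero => left; simp
  | succ r IH =>
    rw [Finset.prod_range_succ]
    rcases IH (fun t ht => hF t (by omega)) with h1 | h1 <;>
      rcases hF r (by omega) with h2 | h2 <;> rw [h1, h2] <;> norm_num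

lemma det_W {n m : ℕ} (hmn : m ≤ n) (sg : Fin n → Fin n → ℝ) (f : Fin m → Fin n)
    (hf : ∀ i, f i ≠ Fin.castLE hmn i) :
    (Matrix.of fun i j : Fin m =>
        (if i = j then (1 : ℝ) else 0)
        - (if f i = Fin.castLE hmn j then sg (Fin.castLE hmn i) (f i) else 0)).det =
    ∏ x ∈ cycleReps Fin.val (extFun hmn f),
      (1 - pathProd sg (extFun hmn f) x (minimalPeriod (extFun hmn f) x)) := by
  classical
  set g := extFun hmn f with hg
  set w : Fin n → ℝ := fun v => if _ : (v : ℕ) < m then sg v (g v) else 0 with hw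
  set S : Finset (Fin n) := Finset.univ.filter (fun v : Fin n => (v : ℕ) < m) with hS
  have hmem : ∀ i : Fin m, Fin.castLE hmn i ∈ S := fun i => by
    rw [hS, Finset.mem_filter]
    exact ⟨Finset.mem_univ _, i.2⟩
  set e : Fin m ≃ ↥S :=
    { toFun := fun i => ⟨Fin.castLE hmn i, hmem i⟩
      invFun := fun v => ⟨((v : Fin n) : ℕ), (Finset.mem_filter.1 v.2).2⟩
      left_inv := fun i => Fin.ext rfl
      right_inv := fun v => Subtype.ext (Fin.ext rfl) } with he
  have hgcast : ∀ i : Fin m, g (Fin.castLE hmn i) = f i := by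
    intro i
    rw [hg, extFun_lt hmn f (i.2 : ((Fin.castLE hmn i : Fin n) : ℕ) < m)]
    exact congrArg f (Fin.ext rfl)
  have h1 : (Matrix.of fun i j : Fin m =>
      (if i = j then (1 : ℝ) else 0)
      - (if f i = Fin.castLE hmn j then sg (Fin.castLE hmn i) (f i) else 0)).det
      = (Matrix.of fun i j : ↥S =>
        (if (i : Fin n) = j then (1 : ℝ) else 0) - (if g i = j then w i else 0)).det := by
    rw [← Matrix.det_submatrix_equiv_self e]
    congr 1
    ext i j
    show (if i = j then (1 : ℝ) else 0)
        - (if f i = Fin.castLE hmn j then sg (Fin.castLE hmn i) (f i) else 0)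
      = (if (Fin.castLE hmn i : Fin n) = Fin.castLE hmn j then (1 : ℝ) else 0)
        - (if g (Fin.castLE hmn i) = Fin.castLE hmn j then w (Fin.castLE hmn i) else 0)
    have hc3 : w (Fin.castLE hmn i) = sg (Fin.castLE hmn i) (f i) := by
      rw [hw]
      show (if _ : ((Fin.castLE hmn i : Fin n) : ℕ) < m
        then sg (Fin.castLE hmn i) (g (Fin.castLE hmn i)) else 0) = _
      rw [dif_pos (show ((Fin.castLE hmn i : Fin n) : ℕ) < m from i.2), hgcast i]
    rw [hgcast i, hc3]
    by_cases hij : i = j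
    · subst hij
      rw [if_pos rfl, if_pos rfl]
    · rw [if_neg hij, if_neg (fun hh => hij (Fin.castLE_injective hmn hh))]
  rw [h1, det_one_sub_funct g w S]
  have horbm : ∀ x : Fin n, 2 ≤ minimalPeriod g x → ∀ t, ((g^[t] x : Fin n) : ℕ) < m :=
    fun x hx t => orbit_lt_of_two_le hmn f hx t
  have hsets : (Finset.univ.filter
      (fun x => x ∈ periodicPts g ∧ (∀ t, g^[t] x ∈ S) ∧ ∀ t, x ≤ g^[t] x))
      = cycleReps Fin.val g := by
    ext z
    rw [cycleReps]
    simp only [Finset.mem_filter, Finset.mem_univ, true_and, IsCycleRep]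
    constructor
    · rintro ⟨hper, horb, hmin⟩
      have hz : (z : ℕ) < m := by
        have := horb 0
        rw [hS, Finset.mem_filter] at this
        exact this.2
      have hgz : g z ≠ z := extFun_ne hmn f hf hz
      have hp1 : 0 < minimalPeriod g z := minimalPeriod_pos_of_mem_periodicPts hper
      have hp2 : minimalPeriod g z ≠ 1 := fun hh =>
        hgz (minimalPeriod_eq_one_iff_isFixedPt.1 hh)
      exact ⟨by omega, fun t => Fin.le_def.1 (hmin t)⟩
    · rintro ⟨h2, hmin⟩
      refine ⟨minimalPeriod_pos_iff_mem_periodicPts.1 (by omega), fun t => ?_,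
        fun t => Fin.le_def.2 (hmin t)⟩
      rw [hS, Finset.mem_filter]
      exact ⟨Finset.mem_univ _, horbm z h2 t⟩
  rw [hsets]
  refine Finset.prod_congr rfl fun x hx => ?_
  have h2x : 2 ≤ minimalPeriod g x := by
    rw [cycleReps, Finset.mem_filter] at hx
    exact hx.2.1
  rw [pathProd_eq_prod]
  congr 1
  refine Finset.prod_congr rfl fun t _ => ?_
  have hlt : ((g^[t] x : Fin n) : ℕ) < m := horbm x h2x t
  rw [hw]
  show (if _ : ((g^[t] x : Fin n) : ℕ) < m then sg (g^[t] x) (g (g^[t] x)) else 0) = _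
  rw [dif_pos hlt, Function.iterate_succ_apply']

theorem stmt10 (n m : ℕ) (hn : 2 ≤ n) (hm : 1 ≤ m) (hmn : m ≤ n)
    (a : Fin n → Fin n → ℝ) (h : Fin n → Fin n → ℝ)
    (hsign : ∀ i j : Fin n, i ≠ j → h i j = 1 ∨ h i j = -1) :
    Matrix.det
      ((Matrix.of fun i j : Fin n =>
          if i = j then ∑ k ∈ Finset.univ.filter fun k => k ≠ i, a i k
          else - (h i j * a i j)).submatrix (Fin.castLE hmn) (Fin.castLE hmn)) =
    ∑ f ∈ @Finset.filter {f : Fin m → Fin n // ∀ i, f i ≠ Fin.castLE hmn i}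
        (fun f => ∀ x ∈ cycleReps Fin.val (extFun hmn f.1),
          pathProd h (extFun hmn f.1) x (minimalPeriod (extFun hmn f.1) x) = -1)
        (Classical.decPred _) Finset.univ,
      2 ^ (cycleReps Fin.val (extFun hmn f.1)).card *
        ∏ i : Fin m, a (Fin.castLE hmn i) (f.1 i) := by
  classical
  set A : Fin m → Finset (Fin n) :=
    fun i => Finset.univ.filter (fun k => k ≠ Fin.castLE hmn i) with hA
  set vec : Fin m → Fin n → (Fin m → ℝ) := fun i k j =>
    (if i = j then (1 : ℝ) else 0)
      - (if k = Fin.castLE hmn j then h (Fin.castLE hmn i) k else 0) with hvec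
  set D : Matrix (Fin m) (Fin m) ℝ := (Matrix.of fun i j : Fin n =>
      if i = j then ∑ k ∈ Finset.univ.filter fun k => k ≠ i, a i k
      else - (h i j * a i j)).submatrix (Fin.castLE hmn) (Fin.castLE hmn) with hD
  have hrows : ∀ i : Fin m, D i = ∑ k ∈ A i, a (Fin.castLE hmn i) k • vec i k := by
    intro i
    funext j
    simp only [hD, Matrix.submatrix_apply, Matrix.of_apply, Finset.sum_apply, Pi.smul_apply,
      smul_eq_mul, hvec, hA]
    by_cases hij : i = j
    · subst hij
      rw [if_pos rfl]
      refine (Finset.sum_congr rfl fun k hk => ?_).symm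
      have hk' : k ≠ Fin.castLE hmn i := (Finset.mem_filter.1 hk).2
      rw [if_pos rfl, if_neg hk']
      ring
    · rw [if_neg (fun hh : Fin.castLE hmn i = Fin.castLE hmn j =>
        hij (Fin.castLE_injective hmn hh))]
      symm
      calc (∑ k ∈ Finset.univ.filter (fun k => k ≠ Fin.castLE hmn i),
            a (Fin.castLE hmn i) k * ((if i = j then (1:ℝ) else 0)
              - (if k = Fin.castLE hmn j then h (Fin.castLE hmn i) k else 0)))
          = ∑ k ∈ Finset.univ.filter (fun k => k ≠ Fin.castLE hmn i),
            (if k = Fin.castLE hmn j then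
              -(h (Fin.castLE hmn i) k * a (Fin.castLE hmn i) k) else 0) := by
            refine Finset.sum_congr rfl fun k _ => ?_
            rw [if_neg hij]
            split_ifs <;> ring
        _ = if Fin.castLE hmn j ∈ Finset.univ.filter (fun k => k ≠ Fin.castLE hmn i) then
              -(h (Fin.castLE hmn i) (Fin.castLE hmn j) * a (Fin.castLE hmn i) (Fin.castLE hmn j))
            else 0 :=
            Finset.sum_ite_eq' _ _ _
        _ = -(h (Fin.castLE hmn i) (Fin.castLE hmn j) * a (Fin.castLE hmn i) (Fin.castLE hmn j)) := by
            rw [if_pos]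
            refine Finset.mem_filter.2 ⟨Finset.mem_univ _, ?_⟩
            exact fun hh => hij (Fin.castLE_injective hmn hh).symm
  -- Step A: multilinear expansion of the determinant
  have hML := (Matrix.detRowAlternating (R := ℝ) (n := Fin m)).toMultilinearMap.map_sum_finset
      (fun i k => a (Fin.castLE hmn i) k • vec i k) A
  have hstep1 : D.det = ∑ r ∈ Fintype.piFinset A,
      (∏ i, a (Fin.castLE hmn i) (r i)) * (Matrix.of fun i j : Fin m => vec i (r i) j).det := by
    have h0 : D.det = (Matrix.detRowAlternating (R := ℝ) (n := Fin m)).toMultilinearMap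
        (fun i => ∑ k ∈ A i, a (Fin.castLE hmn i) k • vec i k) := by
      rw [show (fun i => ∑ k ∈ A i, a (Fin.castLE hmn i) k • vec i k) = D from
        (funext hrows).symm]
      rfl
    rw [h0, hML]
    refine Finset.sum_congr rfl fun r _ => ?_
    rw [MultilinearMap.map_smul_univ, smul_eq_mul]
    rfl
  -- Step B + C : compute each determinant
  have hC : ∀ (f : Fin m → Fin n), (∀ i, f i ≠ Fin.castLE hmn i) →
      (∏ x ∈ cycleReps Fin.val (extFun hmn f),
        (1 - pathProd h (extFun hmn f) x (minimalPeriod (extFun hmn f) x)))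
      = if (∀ x ∈ cycleReps Fin.val (extFun hmn f),
            pathProd h (extFun hmn f) x (minimalPeriod (extFun hmn f) x) = -1)
        then (2 : ℝ) ^ (cycleReps Fin.val (extFun hmn f)).card else 0 := by
    intro f hf
    by_cases hall : ∀ x ∈ cycleReps Fin.val (extFun hmn f),
        pathProd h (extFun hmn f) x (minimalPeriod (extFun hmn f) x) = -1
    · rw [if_pos hall]
      calc (∏ x ∈ cycleReps Fin.val (extFun hmn f),
            (1 - pathProd h (extFun hmn f) x (minimalPeriod (extFun hmn f) x)))
          = ∏ _x ∈ cycleReps Fin.val (extFun hmn f), (2 : ℝ) :=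
            Finset.prod_congr rfl (fun x hx => by rw [hall x hx]; norm_num)
        _ = (2 : ℝ) ^ (cycleReps Fin.val (extFun hmn f)).card := Finset.prod_const 2
    · rw [if_neg hall]
      push_neg at hall
      obtain ⟨x, hx, hne⟩ := hall
      have h2x : 2 ≤ minimalPeriod (extFun hmn f) x := by
        have hx' := hx
        simp only [cycleReps, Finset.mem_filter, IsCycleRep] at hx'
        exact hx'.2.1
      have hpm : pathProd h (extFun hmn f) x (minimalPeriod (extFun hmn f) x) = 1 := by
        rw [pathProd_eq_prod]
        have hfac : ∀ t : ℕ, h ((extFun hmn f)^[t] x) ((extFun hmn f)^[t + 1] x) = 1 ∨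
            h ((extFun hmn f)^[t] x) ((extFun hmn f)^[t + 1] x) = -1 := by
          intro t
          have hlt : (((extFun hmn f)^[t] x : Fin n) : ℕ) < m :=
            orbit_lt_of_two_le hmn f h2x t
          have hne2 : (extFun hmn f)^[t] x ≠ (extFun hmn f)^[t + 1] x := by
            rw [Function.iterate_succ_apply']
            exact fun hh => (extFun_ne hmn f hf hlt) hh.symm
          exact hsign _ _ hne2
        rcases prod_pm _ _ (fun t _ => hfac t) with h1 | h1
        · exact h1
        · exact absurd (by rw [pathProd_eq_prod]; exact h1) hne
      refine Finset.prod_eq_zero hx ?_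
      rw [hpm]
      norm_num
  -- assemble
  have hsum : ∀ r ∈ Fintype.piFinset A,
      (∏ i, a (Fin.castLE hmn i) (r i)) * (Matrix.of fun i j : Fin m => vec i (r i) j).det
      = if (∀ x ∈ cycleReps Fin.val (extFun hmn r),
            pathProd h (extFun hmn r) x (minimalPeriod (extFun hmn r) x) = -1)
        then (2 : ℝ) ^ (cycleReps Fin.val (extFun hmn r)).card *
          ∏ i, a (Fin.castLE hmn i) (r i) else 0 := by
    intro r hr
    have hfr : ∀ i, r i ≠ Fin.castLE hmn i := by
      intro i
      have hri := Fintype.mem_piFinset.1 hr i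
      rw [hA] at hri
      exact (Finset.mem_filter.1 hri).2
    rw [show (Matrix.of fun i j : Fin m => vec i (r i) j)
        = (Matrix.of fun i j : Fin m =>
          (if i = j then (1 : ℝ) else 0)
          - (if r i = Fin.castLE hmn j then h (Fin.castLE hmn i) (r i) else 0)) from rfl,
      det_W hmn h r hfr, hC r hfr]
    by_cases hcond : ∀ x ∈ cycleReps Fin.val (extFun hmn r),
        pathProd h (extFun hmn r) x (minimalPeriod (extFun hmn r) x) = -1
    · rw [if_pos hcond, if_pos hcond]; ring
    · rw [if_neg hcond, if_neg hcond]; ring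
  rw [hstep1, Finset.sum_congr rfl hsum, Finset.sum_filter]
  rw [Finset.sum_subtype (Fintype.piFinset A)
    (p := fun r : Fin m → Fin n => ∀ i, r i ≠ Fin.castLE hmn i) ?_ ]
  · refine Finset.sum_congr rfl fun f _ => ?_
    congr!
  · intro r
    rw [Fintype.mem_piFinset]
    constructor
    · intro hh i
      have := hh i
      rw [hA] at this
      exact (Finset.mem_filter.1 this).2
    · intro hh i
      rw [hA]
      exact Finset.mem_filter.2 ⟨Finset.mem_univ _, hh i⟩
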